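/- Let M be a generalized Eulerian A_n(K)-module. Then H_1(X_n; M) (the kernel of multiplication by X_n on M(−1)) and H_0(X_n; M) = M/X_nM are generalized Eulerian A_{n−1}(K)-modules. -/

import Mathlib

/-! ### The Weyl algebra `A_n(K)` as a quotient of the free algebra. -/

/-- The defining relations of the `n`-th Weyl algebra: the `X_i` commute, the `∂_i` commute,
and `∂_i X_j = X_j ∂_i + δ_{ij}`. -/
inductive WeylRel (K : Type) [Field K] (n : ℕ) :
    FreeAlgebra K (Fin n ⊕ Fin n) → FreeAlgebra K (Fin n ⊕ Fin n) → Prop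
  | xx (i j : Fin n) : WeylRel K n
      (FreeAlgebra.ι K (Sum.inl i) * FreeAlgebra.ι K (Sum.inl j))
      (FreeAlgebra.ι K (Sum.inl j) * FreeAlgebra.ι K (Sum.inl i))
  | dd (i j : Fin n) : WeylRel K n
      (FreeAlgebra.ι K (Sum.inr i) * FreeAlgebra.ι K (Sum.inr j))
      (FreeAlgebra.ι K (Sum.inr j) * FreeAlgebra.ι K (Sum.inr i))
  | dx (i j : Fin n) : WeylRel K n
      (FreeAlgebra.ι K (Sum.inr i) * FreeAlgebra.ι K (Sum.inl j))
      (FreeAlgebra.ι K (Sum.inl j) * FreeAlgebra.ι K (Sum.inr i) + if i = j then 1 else 0)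

/-- The `n`-th Weyl algebra over `K`. -/
abbrev WeylAlgebra (K : Type) [Field K] (n : ℕ) : Type := RingQuot (WeylRel K n)

/-- The variable `X_i` (degree `+1`) in the Weyl algebra. -/
noncomputable def Wx (K : Type) [Field K] {n : ℕ} (i : Fin n) : WeylAlgebra K n :=
  RingQuot.mkAlgHom K (WeylRel K n) (FreeAlgebra.ι K (Sum.inl i))

/-- The partial derivative `∂_i` (degree `-1`) in the Weyl algebra. -/
noncomputable def Wd (K : Type) [Field K] {n : ℕ} (i : Fin n) : WeylAlgebra K n :=
  RingQuot.mkAlgHom K (WeylRel K n) (FreeAlgebra.ι K (Sum.inr i))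

/-- The Euler operator `ℰ_n = ∑ X_i ∂_i`. -/
noncomputable def weylEuler (K : Type) [Field K] (n : ℕ) : WeylAlgebra K n :=
  ∑ i : Fin n, Wx K i * Wd K i

/-- The Euler operator `ℰ_r = ∑_{i < r} X_i ∂_i` of the subalgebra `A_r(K) ⊆ A_n(K)`. -/
noncomputable def weylEulerUpTo (K : Type) [Field K] (n r : ℕ) : WeylAlgebra K n :=
  ∑ i ∈ Finset.univ.filter (fun i : Fin n => (i : ℕ) < r), Wx K i * Wd K i


section Aux
variable {K : Type} [Field K] {n : ℕ}

lemma Wxx (i j : Fin n) : Wx K i * Wx K j = Wx K j * Wx K i := by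
  have h := RingQuot.mkAlgHom_rel K (WeylRel.xx (K := K) i j)
  simpa only [map_mul, Wx] using h

lemma Wdx (i j : Fin n) :
    Wd K i * Wx K j = Wx K j * Wd K i + if i = j then 1 else 0 := by
  have h := RingQuot.mkAlgHom_rel K (WeylRel.dx (K := K) i j)
  by_cases hij : i = j
  · simp only [hij, if_pos, map_mul, map_add, map_one, Wd, Wx] at h ⊢
    exact h
  · simp only [if_neg hij, map_mul, map_add, map_zero, add_zero, Wd, Wx] at h ⊢
    exact h

lemma euler_split (hn : 0 < n) :
    weylEuler K n = weylEulerUpTo K n (n-1)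
      + Wx K (⟨n-1, Nat.sub_lt hn Nat.one_pos⟩ : Fin n) * Wd K (⟨n-1, Nat.sub_lt hn Nat.one_pos⟩ : Fin n) := by
  classical
  rw [weylEuler, weylEulerUpTo,
    ← Finset.sum_filter_add_sum_filter_not Finset.univ (fun i : Fin n => (i:ℕ) < n-1)]
  congr 1
  have hset : Finset.univ.filter (fun i : Fin n => ¬ (i:ℕ) < n-1)
      = {(⟨n-1, Nat.sub_lt hn Nat.one_pos⟩ : Fin n)} := by
    ext i
    simp only [Finset.mem_filter, Finset.mem_univ, true_and, Finset.mem_singleton, not_lt]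
    constructor
    · intro h
      have := i.isLt
      exact Fin.ext (by simp only [Fin.val_mk]; omega)
    · intro h; subst h; simp
  rw [hset, Finset.sum_singleton]

lemma eulerUpTo_comm_x (hn : 0 < n) :
    weylEulerUpTo K n (n-1) * Wx K (⟨n-1, Nat.sub_lt hn Nat.one_pos⟩ : Fin n)
      = Wx K (⟨n-1, Nat.sub_lt hn Nat.one_pos⟩ : Fin n) * weylEulerUpTo K n (n-1) := by
  rw [weylEulerUpTo, Finset.sum_mul, Finset.mul_sum]
  refine Finset.sum_congr rfl fun i hi => ?_
  have hi' : (i:ℕ) < n-1 := (Finset.mem_filter.mp hi).2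
  have hij : i ≠ (⟨n-1, Nat.sub_lt hn Nat.one_pos⟩ : Fin n) := by
    intro h; rw [h] at hi'; simp at hi'
  set x := Wx K (⟨n-1, Nat.sub_lt hn Nat.one_pos⟩ : Fin n) with hxdef
  calc Wx K i * Wd K i * x = Wx K i * (Wd K i * x) := mul_assoc _ _ _
    _ = Wx K i * (x * Wd K i + 0) := by rw [hxdef, Wdx, if_neg hij]
    _ = (Wx K i * x) * Wd K i := by rw [add_zero, ← mul_assoc]
    _ = (x * Wx K i) * Wd K i := by rw [Wxx]
    _ = x * (Wx K i * Wd K i) := mul_assoc _ _ _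

lemma pow_decomp (hn : 0 < n) (j : ℤ) (a : ℕ) :
    ∃ c : WeylAlgebra K n,
      (weylEulerUpTo K n (n-1) - (j : WeylAlgebra K n)) ^ a
        = (weylEuler K n - (j : WeylAlgebra K n)) ^ a
          + Wx K (⟨n-1, Nat.sub_lt hn Nat.one_pos⟩ : Fin n) * c := by
  set x := Wx K (⟨n-1, Nat.sub_lt hn Nat.one_pos⟩ : Fin n) with hxdef
  set d := Wd K (⟨n-1, Nat.sub_lt hn Nat.one_pos⟩ : Fin n) with hddef
  set A := weylEuler K n - (j : WeylAlgebra K n) with hA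
  set B := weylEulerUpTo K n (n-1) - (j : WeylAlgebra K n) with hB
  have hcomm : B * x = x * B := by
    rw [hB, sub_mul, mul_sub, eulerUpTo_comm_x hn, (Int.cast_commute j x).eq]
  have hE : B = A - x * d := by
    rw [hA, hB, euler_split hn, add_sub_right_comm, add_sub_cancel_right]
  induction a with
  | zero => exact ⟨0, by simp⟩
  | succ a ih =>
    obtain ⟨c, hc⟩ := ih
    refine ⟨B * c - d * A^a, ?_⟩
    calc B^(a+1) = B * B^a := by rw [pow_succ']
      _ = B * (A^a + x * c) := by rw [hc]
      _ = B * A^a + B * (x * c) := by rw [mul_add]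
      _ = (A - x*d) * A^a + (B * x) * c := by rw [← hE, mul_assoc]
      _ = A^(a+1) - x*(d*A^a) + x*(B*c) := by
          rw [sub_mul, ← pow_succ', hcomm, mul_assoc, mul_assoc]
      _ = A^(a+1) + x * (B * c - d * A^a) := by rw [mul_sub]; abel

end Aux

/-- Monomials of degree `d` in the variables `X_1, …, X_n` inside the Weyl algebra. -/
def xMonomials (K : Type) [Field K] (n d : ℕ) : Set (WeylAlgebra K n) :=
  {w | ∃ l : List (Fin n), l.length = d ∧ w = (l.map (Wx K)).prod}

/-- `f` is a homogeneous polynomial of degree `d` in `R = K[X_1, …, X_n] ⊆ A_n(K)`. -/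
def IsHomogPoly (K : Type) [Field K] {n : ℕ} (f : WeylAlgebra K n) (d : ℕ) : Prop :=
  f ∈ Submodule.span K (xMonomials K n d)

/-! ### Graded (left) modules over the Weyl algebra. -/

/-- A graded left `A_n(K)`-module: a module over the Weyl algebra together with an internal
`ℤ`-grading, stable under `K` and such that `X_i` raises degree by one and `∂_i` lowers it
by one. -/
structure GWM (K : Type) [Field K] (n : ℕ) where
  carrier : Type
  [acg : AddCommGroup carrier]
  [mod : Module (WeylAlgebra K n) carrier]
  deg : ℤ → AddSubgroup carrier
  isInternal : DirectSum.IsInternal deg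
  k_smul : ∀ (c : K) (j : ℤ) (m : carrier), m ∈ deg j →
    algebraMap K (WeylAlgebra K n) c • m ∈ deg j
  x_smul : ∀ (i : Fin n) (j : ℤ) (m : carrier), m ∈ deg j → Wx K i • m ∈ deg (j + 1)
  d_smul : ∀ (i : Fin n) (j : ℤ) (m : carrier), m ∈ deg j → Wd K i • m ∈ deg (j - 1)

attribute [instance] GWM.acg GWM.mod

instance {K : Type} [Field K] {n : ℕ} : CoeSort (GWM K n) Type := ⟨GWM.carrier⟩

/-- A graded `A_n(K)`-module is *generalized Eulerian* if every homogeneous element `z`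
is killed by some power of `ℰ_n - |z|`. -/
def GWM.IsGenEulerian {K : Type} [Field K] {n : ℕ} (M : GWM K n) : Prop :=
  ∀ (j : ℤ) (m : M.carrier), m ∈ M.deg j →
    ∃ a : ℕ, 1 ≤ a ∧ ((weylEuler K n - (j : WeylAlgebra K n)) ^ a) • m = 0

/-- A graded module is concentrated in degree `d` if all other graded pieces vanish. -/
def GWM.ConcentratedIn {K : Type} [Field K] {n : ℕ} (M : GWM K n) (d : ℤ) : Prop :=
  ∀ j : ℤ, j ≠ d → M.deg j = ⊥

/-- Let `M` be a generalized Eulerian `A_n(K)`-module.  Then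
`H_1(X_n; M)` (the kernel of multiplication by `X_n` on `M(-1)`) and
`H_0(X_n; M) = M/X_nM` are generalized Eulerian `A_{n-1}(K)`-modules: for every
homogeneous element of degree `j` of either, some power of `ℰ_{n-1} - j` kills it (in the
quotient, for `H_0`). -/
theorem koszul_Xn_is_generalizedEulerian
    (K : Type) [Field K] [CharZero K] (n : ℕ) (hn : 0 < n)
    (M : GWM K n) (hM : M.IsGenEulerian) :
    (∀ (j : ℤ) (z : M.carrier), z ∈ M.deg (j - 1) → Wx K (⟨n - 1, by omega⟩ : Fin n) • z = 0 →
      ∃ a : ℕ, 1 ≤ a ∧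
        ((weylEulerUpTo K n (n - 1) - (j : WeylAlgebra K n)) ^ a) • z = 0) ∧
    (∀ (j : ℤ) (m : M.carrier), m ∈ M.deg j →
      ∃ a : ℕ, 1 ≤ a ∧ ∃ m' : M.carrier,
        ((weylEulerUpTo K n (n - 1) - (j : WeylAlgebra K n)) ^ a) • m =
          Wx K (⟨n - 1, by omega⟩ : Fin n) • m') := by
  constructor
  · intro j z hz hxz
    obtain ⟨a, ha, hkill⟩ := hM (j-1) z hz
    refine ⟨a, ha, ?_⟩
    have hkill' : ((weylEuler K n - ((j : WeylAlgebra K n) - 1)) ^ a) • z = 0 := by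
      have hcast : ((j - 1 : ℤ) : WeylAlgebra K n) = (j : WeylAlgebra K n) - 1 := by
        push_cast; ring_nf
      rwa [hcast] at hkill
    set x := Wx K (⟨n-1, by omega⟩ : Fin n) with hxdef
    set d := Wd K (⟨n-1, by omega⟩ : Fin n) with hddef
    set A := weylEuler K n - ((j : WeylAlgebra K n) - 1) with hA
    set B := weylEulerUpTo K n (n-1) - (j : WeylAlgebra K n) with hB
    have hxz' : x • z = 0 := hxz
    have hcomm : B * x = x * B := by
      rw [hB, sub_mul, mul_sub, eulerUpTo_comm_x hn, (Int.cast_commute j x).eq]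
    have hdx : d * x = x * d + 1 := by
      rw [hxdef, hddef, Wdx, if_pos rfl]
    have hsplit : weylEuler K n = weylEulerUpTo K n (n-1) + x * d := by
      rw [hxdef, hddef]; exact euler_split hn
    have hE : B = A - x * d - 1 := by rw [hA, hB, hsplit]; abel
    have key : ∀ k : ℕ, (B^k) • z = (A^k) • z ∧ x • ((A^k) • z) = 0 := by
      intro k
      induction k with
      | zero =>
        refine ⟨by simp, ?_⟩
        rw [pow_zero, one_smul]; exact hxz'
      | succ k ih =>
        obtain ⟨ih1, ih2⟩ := ih
        set w := (A^k) • z with hw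
        have hxdw : (x * d) • w = -w := by
          have h1 : (d * x) • w = d • (x • w) := mul_smul _ _ _
          rw [ih2] at h1
          rw [hdx] at h1
          rw [add_smul, one_smul, smul_zero] at h1
          exact eq_neg_of_add_eq_zero_left h1
        have hBw : B • w = A • w := by
          rw [hE, sub_smul, sub_smul, one_smul, hxdw]
          abel
        have hstep1 : (B^(k+1)) • z = A • w := by
          rw [pow_succ', mul_smul, ih1]; exact hBw
        refine ⟨?_, ?_⟩
        · rw [hstep1, pow_succ', mul_smul]
        · have hAw : (A^(k+1)) • z = B • w := by
            rw [pow_succ', mul_smul, hBw]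
          rw [hAw]
          have : x • (B • w) = B • (x • w) := by
            rw [← mul_smul, ← hcomm, mul_smul]
          rw [this, ih2, smul_zero]
    obtain ⟨h1, _⟩ := key a
    exact h1.trans hkill'
  · intro j m hm
    obtain ⟨a, ha, hkill⟩ := hM j m hm
    obtain ⟨c, hc⟩ := pow_decomp (K := K) hn j a
    refine ⟨a, ha, c • m, ?_⟩
    rw [hc, add_smul, hkill, zero_add, mul_smul]
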